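/- Let Ω ⊂ ℝᵈ be a bounded Lipschitz domain, p > d, and P : W^{2,p}(Ω; ℝᵈ) → ℝ a convex Gateaux-differentiable functional of the form y ↦ ∫_Ω P₀(∇²y) dx with P₀ convex and C¹. Let (y_k)_k ⊂ W^{2,p}(Ω; ℝᵈ) with y_k ⇀ y weakly in W^{2,p}(Ω; ℝᵈ), and assume lim_{k→∞} ⟨∂_G P₀(∇²y_k), ∇²(y − y_k)⟩_{L^{p'},L^p} = 0. Then ∂_G P₀(∇²y_k) ⇀ ∂_G P₀(∇²y) weakly in L^{p'}(Ω; ℝ^{d×d×d}). -/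

import Mathlib

open MeasureTheory Filter
open scoped RealInnerProductSpace

section aux

variable {Ω : Type*} [MeasurableSpace Ω] {μ : Measure Ω}
variable {E : Type*} [NormedAddCommGroup E] [InnerProductSpace ℝ E]

/-- Hölder: integrability of the inner product of an `L^q` and an `L^p` function. -/
lemma my_integrable_inner {p q : ℝ} (hpq : p.HolderConjugate q)
    {u v : Ω → E} (hu : MemLp u (ENNReal.ofReal q) μ) (hv : MemLp v (ENNReal.ofReal p) μ) :
    Integrable (fun x => ⟪u x, v x⟫) μ := by
  rw [← memLp_one_iff_integrable]
  refine ⟨hu.1.inner hv.1, ?_⟩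
  haveI : ENNReal.HolderTriple (ENNReal.ofReal q) (ENNReal.ofReal p) 1 := hpq.symm.ennrealOfReal
  have h := eLpNorm_le_eLpNorm_mul_eLpNorm'_of_norm (r := 1)
      (p := ENNReal.ofReal q) (q := ENNReal.ofReal p) hu.1 hv.1
      (fun a b => (inner ℝ a b : ℝ)) 1
      (Eventually.of_forall fun x => by
        simpa [Real.norm_eq_abs] using abs_real_inner_le_norm (u x) (v x))
  · exact lt_of_le_of_lt h (ENNReal.mul_lt_top (ENNReal.mul_lt_top ENNReal.coe_lt_top hu.2) hv.2)

/-- Hölder: integrability of the product of an `L^q` and an `L^p` real function. -/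
lemma my_integrable_mul {p q : ℝ} (hpq : p.HolderConjugate q)
    {u v : Ω → ℝ} (hu : MemLp u (ENNReal.ofReal q) μ) (hv : MemLp v (ENNReal.ofReal p) μ) :
    Integrable (fun x => u x * v x) μ := by
  have := my_integrable_inner (μ := μ) (E := ℝ) hpq hu hv
  simpa [RCLike.inner_apply, conj_trivial, mul_comm] using this

/-- Growth bound implies `DP0 ∘ u ∈ L^q` whenever `u ∈ L^p`. -/
lemma my_memLp_comp {p q c : ℝ} (hpq : p.HolderConjugate q)
    {DP0 : E → E} (hcont : Continuous DP0)
    (hgrowth : ∀ G, ‖DP0 G‖ ≤ c * ‖G‖ ^ (p - 1))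
    {u : Ω → E} (hu : MemLp u (ENNReal.ofReal p) μ) :
    MemLp (fun x => DP0 (u x)) (ENNReal.ofReal q) μ := by
  have hp1 : (0:ℝ) < p - 1 := by linarith [hpq.lt]
  have hrp : MemLp (fun x => ‖u x‖ ^ (p - 1)) (ENNReal.ofReal q) μ := by
    constructor
    · exact (Real.continuous_rpow_const hp1.le).comp_aestronglyMeasurable hu.1.norm
    · rw [eLpNorm_norm_rpow u hp1]
      have hq : ENNReal.ofReal q * ENNReal.ofReal (p - 1) = ENNReal.ofReal p := by
        rw [← ENNReal.ofReal_mul hpq.symm.pos.le]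
        congr 1
        rw [mul_comm]
        exact hpq.sub_one_mul_conj
      rw [hq]
      exact ENNReal.rpow_lt_top_of_nonneg hp1.le hu.2.ne
  refine hrp.of_le_mul (c := c) (hcont.comp_aestronglyMeasurable hu.1)
    (Eventually.of_forall fun x => ?_)
  have : ‖‖u x‖ ^ (p - 1)‖ = ‖u x‖ ^ (p - 1) :=
    Real.norm_of_nonneg (Real.rpow_nonneg (norm_nonneg _) _)
  rw [this]
  exact hgrowth (u x)

/-- Monotonicity of the gradient of a convex function. -/
lemma my_grad_mono [CompleteSpace E] {P0 : E → ℝ} {DP0 : E → E}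
    (hconv : ConvexOn ℝ Set.univ P0) (hgrad : ∀ G, HasGradientAt P0 (DP0 G) G)
    (a b : E) : ⟪DP0 b, a - b⟫ ≤ ⟪DP0 a, a - b⟫ := by
  set L : ℝ →ᵃ[ℝ] E := AffineMap.lineMap b a with hLdef
  have hf : ConvexOn ℝ Set.univ (P0 ∘ L) := by
    simpa using hconv.comp_affineMap L
  have hL : ∀ t : ℝ, HasDerivAt (fun s : ℝ => L s) (a - b) t := by
    intro t
    have : (fun s : ℝ => L s) = fun s : ℝ => s • (a - b) + b := by
      funext s
      simp [hLdef, AffineMap.lineMap_apply_module']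
    rw [this]
    simpa using ((hasDerivAt_id t).smul_const (a - b)).add_const b
  have hd : ∀ t : ℝ, HasDerivAt (P0 ∘ L) ⟪DP0 (L t), a - b⟫ t := by
    intro t
    have h1 := (hgrad (L t)).hasFDerivAt.comp_hasDerivAt t (hL t)
    simpa [InnerProductSpace.toDual_apply_apply] using h1
  have h1 := hf.le_slope_of_hasDerivAt (Set.mem_univ (0:ℝ)) (Set.mem_univ 1) one_pos (hd 0)
  have h2 := hf.slope_le_of_hasDerivAt (Set.mem_univ (0:ℝ)) (Set.mem_univ 1) one_pos (hd 1)
  have hL0 : L (0:ℝ) = b := by simp [hLdef]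
  have hL1 : L (1:ℝ) = a := by simp [hLdef]
  calc ⟪DP0 b, a - b⟫ = ⟪DP0 (L 0), a - b⟫ := by rw [hL0]
    _ ≤ slope (P0 ∘ L) 0 1 := h1
    _ ≤ ⟪DP0 (L 1), a - b⟫ := h2
    _ = ⟪DP0 a, a - b⟫ := by rw [hL1]

end aux

set_option maxHeartbeats 1600000 in
/-- Minty trick: Let `P₀ : ℝ^{d×d×d} → ℝ` be convex and continuously
differentiable with gradient `DP₀` satisfying `|DP₀(G)| ≤ c|G|^{p-1}`, `p > d`. If
`g_k = ∇²y_k ⇀ g = ∇²y` weakly in `L^p(Ω; ℝ^{d×d×d})` (weak convergence tested against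
all `L^{p'}` functions, `p'` the conjugate exponent) and
`∫ ⟨DP₀(g_k), g − g_k⟩ → 0`, then `DP₀(g_k) ⇀ DP₀(g)` weakly in `L^{p'}(Ω; ℝ^{d×d×d})`. -/
theorem stmt_5 {Ω : Type*} [MeasurableSpace Ω] (μ : Measure Ω)
    (d : ℕ) (hd : 1 ≤ d) (p q c : ℝ) (hpd : (d : ℝ) < p) (hpq : p.HolderConjugate q)
    (P0 : EuclideanSpace ℝ (Fin d × Fin d × Fin d) → ℝ)
    (DP0 : EuclideanSpace ℝ (Fin d × Fin d × Fin d) → EuclideanSpace ℝ (Fin d × Fin d × Fin d))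
    (hP0conv : ConvexOn ℝ Set.univ P0)
    (hP0grad : ∀ G, HasGradientAt P0 (DP0 G) G)
    (hP0cont : Continuous DP0)
    (hgrowth : ∀ G, ‖DP0 G‖ ≤ c * ‖G‖ ^ (p - 1))
    (g : ℕ → Ω → EuclideanSpace ℝ (Fin d × Fin d × Fin d))
    (g' : Ω → EuclideanSpace ℝ (Fin d × Fin d × Fin d))
    (hg : ∀ k, MemLp (g k) (ENNReal.ofReal p) μ)
    (hg' : MemLp g' (ENNReal.ofReal p) μ)
    (hweak : ∀ φ : Ω → EuclideanSpace ℝ (Fin d × Fin d × Fin d),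
      MemLp φ (ENNReal.ofReal q) μ →
      Tendsto (fun k => ∫ x, ⟪g k x, φ x⟫ ∂μ) atTop (nhds (∫ x, ⟪g' x, φ x⟫ ∂μ)))
    (hMinty : Tendsto (fun k => ∫ x, ⟪DP0 (g k x), g' x - g k x⟫ ∂μ) atTop (nhds 0)) :
    ∀ φ : Ω → EuclideanSpace ℝ (Fin d × Fin d × Fin d), MemLp φ (ENNReal.ofReal p) μ →
      Tendsto (fun k => ∫ x, ⟪DP0 (g k x), φ x⟫ ∂μ) atTop
        (nhds (∫ x, ⟪DP0 (g' x), φ x⟫ ∂μ)) := by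
  intro φ hφ
  have hp1 : (0:ℝ) < p - 1 := by linarith [hpq.lt]
  -- basic MemLp facts
  have hw : ∀ t : ℝ, MemLp (fun x => g' x + t • φ x) (ENNReal.ofReal p) μ := by
    intro t
    exact hg'.add (hφ.const_smul t)
  have hDw : ∀ t : ℝ,
      MemLp (fun x => DP0 (g' x + t • φ x)) (ENNReal.ofReal q) μ :=
    fun t => my_memLp_comp hpq hP0cont hgrowth (hw t)
  have hDg : ∀ k, MemLp (fun x => DP0 (g k x)) (ENNReal.ofReal q) μ :=
    fun k => my_memLp_comp hpq hP0cont hgrowth (hg k)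
  have hsub : ∀ k, MemLp (fun x => g k x - g' x) (ENNReal.ofReal p) μ :=
    fun k => (hg k).sub hg'
  -- the function I(t)
  set F : ℝ → Ω → ℝ := fun t x => ⟪DP0 (g' x + t • φ x), φ x⟫ with hFdef
  have hFint : ∀ t, Integrable (F t) μ := fun t => my_integrable_inner hpq (hDw t) hφ
  set I : ℝ → ℝ := fun t => ∫ x, F t x ∂μ with hIdef
  have hI0 : I 0 = ∫ x, ⟪DP0 (g' x), φ x⟫ ∂μ := by
    simp only [hIdef, hFdef, zero_smul, add_zero]
  -- continuity of I at 0
  have hIcont : ContinuousAt I 0 := by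
    have h1 : MemLp (fun x => ‖g' x‖ + ‖φ x‖) (ENNReal.ofReal p) μ := hg'.norm.add hφ.norm
    have h2 : MemLp (fun x => (‖g' x‖ + ‖φ x‖) ^ (p - 1)) (ENNReal.ofReal q) μ := by
      have := my_memLp_comp (μ := μ) (E := ℝ) hpq (Real.continuous_rpow_const hp1.le)
        (c := 1) (fun r => by
          rw [Real.norm_eq_abs, Real.norm_eq_abs, one_mul]
          exact Real.abs_rpow_le_abs_rpow r (p - 1)) h1
      simpa using this
    have hbound_int : Integrable (fun x => |c| * ((‖g' x‖ + ‖φ x‖) ^ (p - 1) * ‖φ x‖)) μ :=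
      (my_integrable_mul hpq h2 hφ.norm).const_mul |c|
    refine continuousAt_of_dominated (Eventually.of_forall fun t => (hFint t).1) ?_ hbound_int
      (Eventually.of_forall fun x => ?_)
    · filter_upwards [Icc_mem_nhds (by norm_num : (-1:ℝ) < 0) (by norm_num : (0:ℝ) < 1)] with t ht
      refine Eventually.of_forall fun x => ?_
      have habs : |t| ≤ 1 := abs_le.mpr ⟨ht.1, ht.2⟩
      have hn : ‖g' x + t • φ x‖ ≤ ‖g' x‖ + ‖φ x‖ := by
        refine (norm_add_le _ _).trans ?_
        have : ‖t • φ x‖ = |t| * ‖φ x‖ := by rw [norm_smul, Real.norm_eq_abs]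
        rw [this]
        have := mul_le_of_le_one_left (norm_nonneg (φ x)) habs
        linarith
      have hrp : ‖g' x + t • φ x‖ ^ (p - 1) ≤ (‖g' x‖ + ‖φ x‖) ^ (p - 1) :=
        Real.rpow_le_rpow (norm_nonneg _) hn hp1.le
      have h3 : ‖F t x‖ ≤ ‖DP0 (g' x + t • φ x)‖ * ‖φ x‖ := by
        rw [Real.norm_eq_abs]
        exact abs_real_inner_le_norm _ _
      have h4 : ‖DP0 (g' x + t • φ x)‖ ≤ c * ‖g' x + t • φ x‖ ^ (p - 1) := hgrowth _
      have h5 : c * ‖g' x + t • φ x‖ ^ (p - 1) ≤ |c| * ((‖g' x‖ + ‖φ x‖) ^ (p - 1)) := by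
        have hA : (0:ℝ) ≤ ‖g' x + t • φ x‖ ^ (p - 1) := Real.rpow_nonneg (norm_nonneg _) _
        calc c * ‖g' x + t • φ x‖ ^ (p - 1) ≤ |c| * ‖g' x + t • φ x‖ ^ (p - 1) :=
              mul_le_mul_of_nonneg_right (le_abs_self c) hA
          _ ≤ |c| * ((‖g' x‖ + ‖φ x‖) ^ (p - 1)) :=
              mul_le_mul_of_nonneg_left hrp (abs_nonneg c)
      calc ‖F t x‖ ≤ ‖DP0 (g' x + t • φ x)‖ * ‖φ x‖ := h3
        _ ≤ (|c| * ((‖g' x‖ + ‖φ x‖) ^ (p - 1))) * ‖φ x‖ :=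
            mul_le_mul_of_nonneg_right (h4.trans h5) (norm_nonneg _)
        _ = |c| * ((‖g' x‖ + ‖φ x‖) ^ (p - 1) * ‖φ x‖) := by ring
    · exact ((hP0cont.comp (continuous_const.add
        (continuous_id.smul continuous_const))).inner continuous_const).continuousAt
  -- notations
  set a : ℕ → ℝ := fun k => ∫ x, ⟪DP0 (g k x), φ x⟫ ∂μ with hadef
  set A : ℕ → ℝ := fun k => ∫ x, ⟪DP0 (g k x), g k x - g' x⟫ ∂μ with hAdef
  set B : ℝ → ℕ → ℝ := fun t k => ∫ x, ⟪DP0 (g' x + t • φ x), g k x - g' x⟫ ∂μ with hBdef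
  -- key inequality
  have key : ∀ (t : ℝ) (k : ℕ), t * a k ≤ A k - B t k + t * I t := by
    intro t k
    have i1 : Integrable (fun x => ⟪DP0 (g k x), g k x - g' x⟫) μ :=
      my_integrable_inner hpq (hDg k) (hsub k)
    have i2 : Integrable (fun x => ⟪DP0 (g k x), φ x⟫) μ :=
      my_integrable_inner hpq (hDg k) hφ
    have i3 : Integrable (fun x => ⟪DP0 (g' x + t • φ x), g k x - g' x⟫) μ :=
      my_integrable_inner hpq (hDw t) (hsub k)
    have i4 : Integrable (fun x => ⟪DP0 (g' x + t • φ x), φ x⟫) μ :=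
      my_integrable_inner hpq (hDw t) hφ
    have iL : Integrable (fun x =>
        ⟪DP0 (g' x + t • φ x), g k x - g' x⟫ - t * ⟪DP0 (g' x + t • φ x), φ x⟫) μ :=
      i3.sub (i4.const_mul t)
    have iR : Integrable (fun x =>
        ⟪DP0 (g k x), g k x - g' x⟫ - t * ⟪DP0 (g k x), φ x⟫) μ :=
      i1.sub (i2.const_mul t)
    have hpt : ∀ x, ⟪DP0 (g' x + t • φ x), g k x - g' x⟫ - t * ⟪DP0 (g' x + t • φ x), φ x⟫ ≤
        ⟪DP0 (g k x), g k x - g' x⟫ - t * ⟪DP0 (g k x), φ x⟫ := by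
      intro x
      have hmono := my_grad_mono hP0conv hP0grad (g k x) (g' x + t • φ x)
      have hexp : g k x - (g' x + t • φ x) = (g k x - g' x) - t • φ x := by abel
      rw [hexp] at hmono
      simp only [inner_sub_right, real_inner_smul_right] at hmono ⊢
      linarith
    have hint := integral_mono iL iR hpt
    rw [integral_sub i3 (i4.const_mul t), integral_sub i1 (i2.const_mul t),
      integral_const_mul, integral_const_mul] at hint
    simp only [hadef, hAdef, hBdef, hIdef, hFdef]
    linarith
  -- limits of A and B
  have hA : Tendsto A atTop (nhds 0) := by
    have hAeq : A = fun k => -∫ x, ⟪DP0 (g k x), g' x - g k x⟫ ∂μ := by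
      funext k
      simp only [hAdef]
      rw [← integral_neg]
      congr 1
      funext x
      rw [← inner_neg_right]
      congr 1
      abel
    rw [hAeq]
    simpa using hMinty.neg
  have hB : ∀ t : ℝ, Tendsto (fun k => B t k) atTop (nhds 0) := by
    intro t
    have hBeq : ∀ k, B t k = (∫ x, ⟪g k x, DP0 (g' x + t • φ x)⟫ ∂μ) -
        ∫ x, ⟪g' x, DP0 (g' x + t • φ x)⟫ ∂μ := by
      intro k
      simp only [hBdef, inner_sub_right]
      rw [integral_sub (my_integrable_inner hpq (hDw t) (hg k))
        (my_integrable_inner hpq (hDw t) hg')]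
      congr 1
      · congr 1
        funext x
        exact real_inner_comm _ _
      · congr 1
        funext x
        exact real_inner_comm _ _
    simp only [hBeq]
    have := (hweak _ (hDw t)).sub_const (∫ x, ⟪g' x, DP0 (g' x + t • φ x)⟫ ∂μ)
    simpa using this
  -- conclusion
  rw [show (∫ x, ⟪DP0 (g' x), φ x⟫ ∂μ) = I 0 from hI0.symm]
  rw [Metric.tendsto_atTop]
  intro ε hε
  obtain ⟨δ, hδpos, hδ⟩ := Metric.continuousAt_iff.mp hIcont (ε/2) (by linarith)
  set t₀ : ℝ := δ/2 with ht₀def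
  have ht₀pos : 0 < t₀ := by positivity
  have hIp : |I t₀ - I 0| < ε/2 := by
    have : dist t₀ (0:ℝ) < δ := by
      rw [Real.dist_eq, sub_zero, abs_of_pos ht₀pos]; linarith
    simpa [Real.dist_eq] using hδ this
  have hIm : |I (-t₀) - I 0| < ε/2 := by
    have : dist (-t₀) (0:ℝ) < δ := by
      rw [Real.dist_eq, sub_zero, abs_of_neg (by linarith : -t₀ < 0)]; linarith
    simpa [Real.dist_eq] using hδ this
  have hev1 : ∀ᶠ k in atTop, |A k - B t₀ k| < t₀ * (ε/2) := by
    have h := hA.sub (hB t₀)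
    rw [sub_zero] at h
    have := Metric.tendsto_nhds.mp h (t₀ * (ε/2)) (by positivity)
    simpa [Real.dist_eq] using this
  have hev2 : ∀ᶠ k in atTop, |A k - B (-t₀) k| < t₀ * (ε/2) := by
    have h := hA.sub (hB (-t₀))
    rw [sub_zero] at h
    have := Metric.tendsto_nhds.mp h (t₀ * (ε/2)) (by positivity)
    simpa [Real.dist_eq] using this
  have hfin : ∀ᶠ k in atTop, dist (a k) (I 0) < ε := by
    filter_upwards [hev1, hev2] with k h1 h2
    have k1 := key t₀ k
    have k2 := key (-t₀) k
    have e1 : |A k - B t₀ k| < t₀ * (ε/2) := h1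
    have e2 : |A k - B (-t₀) k| < t₀ * (ε/2) := h2
    rw [abs_lt] at e1 e2 hIp hIm
    rw [Real.dist_eq, abs_lt]
    constructor
    · nlinarith [k1, e1.2, hIp.2, ht₀pos]
    · nlinarith [k2, e2.2, hIm.2, ht₀pos]
  exact eventually_atTop.mp hfin
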